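/- Deterministic estimation bound for post-selection least squares: let Ĥ and H be d×d symmetric matrices with H positive definite, λ_min(H) ≥ Λ, ‖Ĥ − H‖_∞ ≤ D^H, and Λ − d·D^H > 0. Let Ĝ, G ∈ ℝᵈ with ‖Ĝ − G‖_∞ ≤ D^G, and define θ̂ = Ĥ⁻¹Ĝ and θ = H⁻¹G. Then ‖θ̂ − θ‖₂ ≤ √d·(D^G + D^H‖θ‖₁)/(Λ − d·D^H), and hence ‖θ̂ − θ‖₁ ≤ d·(D^G + D^H‖θ‖₁)/(Λ − d·D^H). -/

import Mathlib

open Matrix Finset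

private lemma row_abs_le' {d : ℕ} (A : Matrix (Fin d) (Fin d) ℝ) (c : ℝ)
    (hc : ∀ i j, |A i j| ≤ c) (x : Fin d → ℝ) (i : Fin d) :
    |A.mulVec x i| ≤ c * ∑ j, |x j| := by
  simp only [Matrix.mulVec, dotProduct]
  refine (Finset.abs_sum_le_sum_abs _ _).trans ?_
  rw [Finset.mul_sum]
  refine Finset.sum_le_sum fun j _ => ?_
  rw [abs_mul]
  exact mul_le_mul_of_nonneg_right (hc i j) (abs_nonneg _)

private lemma quad_abs_le' {d : ℕ} (A : Matrix (Fin d) (Fin d) ℝ) (c : ℝ)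
    (hc : ∀ i j, |A i j| ≤ c) (x : Fin d → ℝ) :
    |x ⬝ᵥ A.mulVec x| ≤ c * (∑ i, |x i|) ^ 2 := by
  have h1 : |x ⬝ᵥ A.mulVec x| ≤ ∑ i, |x i| * (c * ∑ j, |x j|) := by
    refine (Finset.abs_sum_le_sum_abs _ _).trans (Finset.sum_le_sum fun i _ => ?_)
    rw [abs_mul]
    exact mul_le_mul_of_nonneg_left (row_abs_le' A c hc x i) (abs_nonneg _)
  calc |x ⬝ᵥ A.mulVec x| ≤ ∑ i, |x i| * (c * ∑ j, |x j|) := h1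
    _ = c * (∑ i, |x i|) ^ 2 := by rw [← Finset.sum_mul]; ring

private lemma l1_sq_le' {d : ℕ} (x : Fin d → ℝ) :
    (∑ i, |x i|) ^ 2 ≤ d * ∑ i, (x i) ^ 2 := by
  have := sq_sum_le_card_mul_sum_sq (s := (Finset.univ : Finset (Fin d)))
    (f := fun i => |x i|)
  simpa [sq_abs] using this


/-- Deterministic estimation bound for post-selection least squares:
if `λ_min(H) ≥ Λ`, `‖Ĥ − H‖_∞ ≤ D^H` entrywise with `Λ − d·D^H > 0`, and
`‖Ĝ − G‖_∞ ≤ D^G`, then with `θ̂ = Ĥ⁻¹Ĝ` and `θ = H⁻¹G`,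
`‖θ̂ − θ‖₂ ≤ √d (D^G + D^H ‖θ‖₁)/(Λ − d D^H)` and
`‖θ̂ − θ‖₁ ≤ d (D^G + D^H ‖θ‖₁)/(Λ − d D^H)`. -/
theorem post_selection_ls_deterministic_bound {d : ℕ}
    (H Hhat : Matrix (Fin d) (Fin d) ℝ) (G Ghat : Fin d → ℝ)
    (Λ DH DG : ℝ) (hΛpos : 0 < Λ)
    (hH : H.PosDef) (hHhat : Hhat.IsSymm)
    (hmin : ∀ x : Fin d → ℝ, Λ * (x ⬝ᵥ x) ≤ x ⬝ᵥ H.mulVec x)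
    (hDH : ∀ i j, |Hhat i j - H i j| ≤ DH)
    (hgap : 0 < Λ - d * DH)
    (hDG : ∀ i, |Ghat i - G i| ≤ DG)
    (θhat θ : Fin d → ℝ)
    (hθhat : θhat = Hhat⁻¹.mulVec Ghat) (hθ : θ = H⁻¹.mulVec G) :
    Real.sqrt (∑ i, (θhat i - θ i) ^ 2) ≤
        Real.sqrt d * (DG + DH * ∑ i, |θ i|) / (Λ - d * DH) ∧
      (∑ i, |θhat i - θ i|) ≤ d * (DG + DH * ∑ i, |θ i|) / (Λ - d * DH) := by
  rcases Nat.eq_zero_or_pos d with hd | hd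
  · subst hd
    simp
  have hDH0 : 0 ≤ DH := le_trans (abs_nonneg _) (hDH ⟨0, hd⟩ ⟨0, hd⟩)
  have hDG0 : 0 ≤ DG := le_trans (abs_nonneg _) (hDG ⟨0, hd⟩)
  set M := DG + DH * ∑ i, |θ i| with hMdef
  have hM0 : 0 ≤ M :=
    add_nonneg hDG0 (mul_nonneg hDH0 (Finset.sum_nonneg fun i _ => abs_nonneg _))
  -- H is invertible and H θ = G
  have hHdet : IsUnit H.det := (Matrix.isUnit_iff_isUnit_det _).1 hH.isUnit
  have hHθ : H.mulVec θ = G := by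
    rw [hθ, Matrix.mulVec_mulVec, Matrix.mul_nonsing_inv _ hHdet, Matrix.one_mulVec]
  -- quadratic lower bound for Hhat
  have hquad : ∀ x : Fin d → ℝ,
      (Λ - d * DH) * (∑ i, (x i) ^ 2) ≤ x ⬝ᵥ Hhat.mulVec x := by
    intro x
    have hxx : x ⬝ᵥ x = ∑ i, (x i) ^ 2 := by
      simp [dotProduct, sq]
    have h1 := hmin x
    rw [hxx] at h1
    have h2 : x ⬝ᵥ Hhat.mulVec x = x ⬝ᵥ H.mulVec x + x ⬝ᵥ (Hhat - H).mulVec x := by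
      rw [Matrix.sub_mulVec, dotProduct_sub]; ring
    have h3 := quad_abs_le' (Hhat - H) DH (fun i j => by simpa using hDH i j) x
    have h4 := l1_sq_le' x
    have h5 : DH * (∑ i, |x i|) ^ 2 ≤ DH * ((d : ℝ) * ∑ i, (x i) ^ 2) :=
      mul_le_mul_of_nonneg_left h4 hDH0
    have h6 := neg_abs_le (x ⬝ᵥ (Hhat - H).mulVec x)
    linarith
  -- Hhat is positive definite
  have hherm : Hhat.IsHermitian := by
    rw [Matrix.IsHermitian]
    ext i j
    have := congrFun (congrFun hHhat j) i
    simpa [Matrix.conjTranspose_apply, Matrix.transpose_apply] using this.symm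
  have hHhatPD : Hhat.PosDef := by
    refine Matrix.PosDef.of_dotProduct_mulVec_pos hherm fun x hx => ?_
    have hne : ∃ i, x i ≠ 0 := by
      by_contra h; push_neg at h; exact hx (funext h)
    obtain ⟨i, hi⟩ := hne
    have hpos : 0 < ∑ i, (x i) ^ 2 :=
      Finset.sum_pos' (fun j _ => sq_nonneg _) ⟨i, Finset.mem_univ i, by positivity⟩
    have h1 := hquad x
    have h2 : (0 : ℝ) < (Λ - d * DH) * ∑ i, (x i) ^ 2 := mul_pos hgap hpos
    simpa [star_trivial] using lt_of_lt_of_le h2 h1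
  have hHhatdet : IsUnit Hhat.det := (Matrix.isUnit_iff_isUnit_det _).1 hHhatPD.isUnit
  have hHhatθhat : Hhat.mulVec θhat = Ghat := by
    rw [hθhat, Matrix.mulVec_mulVec, Matrix.mul_nonsing_inv _ hHhatdet, Matrix.one_mulVec]
  -- the error vector and the residual vector
  set e : Fin d → ℝ := fun i => θhat i - θ i with hedef
  set v : Fin d → ℝ := fun i => (Ghat i - G i) - (Hhat - H).mulVec θ i with hvdef
  have hev : Hhat.mulVec e = v := by
    funext i
    have he' : e = θhat - θ := rfl
    rw [he', Matrix.mulVec_sub, hHhatθhat]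
    have := congrFun hHθ i
    simp only [hvdef, Matrix.sub_mulVec, Pi.sub_apply]
    rw [← this]
    ring
  have hvbound : ∀ i, |v i| ≤ M := by
    intro i
    have h1 : |(Hhat - H).mulVec θ i| ≤ DH * ∑ j, |θ j| :=
      row_abs_le' (Hhat - H) DH (fun i j => by simpa using hDH i j) θ i
    calc |v i| ≤ |Ghat i - G i| + |(Hhat - H).mulVec θ i| := abs_sub _ _
      _ ≤ DG + DH * ∑ j, |θ j| := add_le_add (hDG i) h1
  set s := ∑ i, (θhat i - θ i) ^ 2 with hsdef
  have hs0 : 0 ≤ s := Finset.sum_nonneg fun i _ => sq_nonneg _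
  have hse : s = ∑ i, (e i) ^ 2 := rfl
  -- key chain of inequalities
  have key1 : (Λ - d * DH) * s ≤ ∑ i, e i * v i := by
    have h1 := hquad e
    rw [hev] at h1
    rw [hse]
    exact h1.trans_eq rfl
  have key2 : ∑ i, e i * v i ≤ Real.sqrt s * Real.sqrt (∑ i, (v i) ^ 2) := by
    have := Real.sum_mul_le_sqrt_mul_sqrt Finset.univ e v
    rw [hse]
    exact this
  have key3 : Real.sqrt (∑ i, (v i) ^ 2) ≤ Real.sqrt d * M := by
    have h1 : ∑ i, (v i) ^ 2 ≤ (d : ℝ) * M ^ 2 := by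
      calc ∑ i, (v i) ^ 2 ≤ ∑ _i : Fin d, M ^ 2 := by
            refine Finset.sum_le_sum fun i _ => ?_
            rw [← sq_abs]
            exact pow_le_pow_left₀ (abs_nonneg _) (hvbound i) 2
        _ = (d : ℝ) * M ^ 2 := by simp [mul_comm]
    calc Real.sqrt (∑ i, (v i) ^ 2) ≤ Real.sqrt ((d : ℝ) * M ^ 2) := Real.sqrt_le_sqrt h1
      _ = Real.sqrt d * M := by
          rw [Real.sqrt_mul (Nat.cast_nonneg d), Real.sqrt_sq hM0]
  have key : (Λ - d * DH) * s ≤ Real.sqrt s * (Real.sqrt d * M) := by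
    calc (Λ - d * DH) * s ≤ ∑ i, e i * v i := key1
      _ ≤ Real.sqrt s * Real.sqrt (∑ i, (v i) ^ 2) := key2
      _ ≤ Real.sqrt s * (Real.sqrt d * M) :=
          mul_le_mul_of_nonneg_left key3 (Real.sqrt_nonneg _)
  -- first bound
  have bound1 : Real.sqrt s ≤ Real.sqrt d * M / (Λ - d * DH) := by
    rcases eq_or_lt_of_le hs0 with h | h
    · rw [← h, Real.sqrt_zero]
      exact div_nonneg (mul_nonneg (Real.sqrt_nonneg _) hM0) hgap.le
    · have hsq : 0 < Real.sqrt s := Real.sqrt_pos.2 h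
      have h3 : ((Λ - d * DH) * Real.sqrt s) * Real.sqrt s ≤
          (Real.sqrt d * M) * Real.sqrt s := by
        rw [mul_assoc, Real.mul_self_sqrt hs0]
        linarith
      have h2 := le_of_mul_le_mul_right h3 hsq
      rw [le_div_iff₀ hgap]
      linarith
  refine ⟨bound1, ?_⟩
  -- second bound
  have hdd : Real.sqrt d * Real.sqrt d = (d : ℝ) := Real.mul_self_sqrt (Nat.cast_nonneg d)
  have hb2 : ∑ i, |θhat i - θ i| ≤ Real.sqrt d * Real.sqrt s := by
    have hnn : 0 ≤ ∑ i, |θhat i - θ i| := Finset.sum_nonneg fun i _ => abs_nonneg _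
    have h1 : (∑ i, |θhat i - θ i|) = Real.sqrt ((∑ i, |θhat i - θ i|) ^ 2) :=
      (Real.sqrt_sq hnn).symm
    rw [h1, ← Real.sqrt_mul (Nat.cast_nonneg d)]
    exact Real.sqrt_le_sqrt (l1_sq_le' (fun i => θhat i - θ i))
  calc ∑ i, |θhat i - θ i| ≤ Real.sqrt d * Real.sqrt s := hb2
    _ ≤ Real.sqrt d * (Real.sqrt d * M / (Λ - d * DH)) :=
        mul_le_mul_of_nonneg_left bound1 (Real.sqrt_nonneg _)
    _ = (d : ℝ) * M / (Λ - d * DH) := by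
        rw [show Real.sqrt (d : ℝ) * (Real.sqrt (d : ℝ) * M / (Λ - d * DH)) =
            Real.sqrt (d : ℝ) * Real.sqrt (d : ℝ) * M / (Λ - d * DH) from by ring, hdd]
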